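/- Let N be a commutative ℝ-algebra in which every finite-codimensional maximal ideal m satisfies N/m ≅ ℝ, and let I be an ideal of finite codimension s > 0. Then the radical √I equals the intersection of the (finitely many, at most s) finite-codimensional maximal ideals containing I, and (√I)^s ⊆ I. -/
import Mathlib

lemma aux_pow_stab {A : Type*} [CommRing A] (J : Ideal A) (hJ : IsNilpotent J)
    {i : ℕ} (h : J ^ (i + 1) = J ^ i) : J ^ i = ⊥ := by
  obtain ⟨n, hn⟩ := hJ
  have key : ∀ k, J ^ (i + k) = J ^ i := by
    intro k
    induction k with
    | zero => rfl
    | succ k ih =>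
      calc J ^ (i + (k + 1)) = J ^ (i + k) * J := by rw [← pow_succ]; ring_nf
      _ = J ^ i * J := by rw [ih]
      _ = J ^ (i + 1) := (pow_succ J i).symm
      _ = J ^ i := h
  have : J ^ i ≤ J ^ n := by
    rw [← key n]
    exact Ideal.pow_le_pow_right (Nat.le_add_left n i)
  rw [hn] at this
  exact le_bot_iff.mp this

lemma aux_nilpotent_pow {A : Type*} [CommRing A] [Algebra ℝ A] [FiniteDimensional ℝ A]
    (J : Ideal A) (hJ : IsNilpotent J) : J ^ (Module.finrank ℝ A) = ⊥ := by
  set s := Module.finrank ℝ A with hs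
  have main : ∀ i, J ^ i = ⊥ ∨
      Module.finrank ℝ (Submodule.restrictScalars ℝ (J ^ i : Ideal A)) + i ≤ s := by
    intro i
    induction i with
    | zero =>
      right
      have h0 : (J ^ 0 : Ideal A) = ⊤ := by rw [pow_zero, Ideal.one_eq_top]
      rw [h0]
      have h1 : Submodule.restrictScalars ℝ ((⊤ : Ideal A) : Submodule A A) =
          (⊤ : Submodule ℝ A) := rfl
      rw [h1, Nat.add_zero, hs]
      exact le_of_eq (finrank_top ℝ A)
    | succ i ih =>
      rcases ih with hbot | hle
      · left
        rw [pow_succ, hbot, Ideal.bot_mul]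
      · by_cases heq : J ^ (i + 1) = J ^ i
        · left
          rw [heq]
          exact aux_pow_stab J hJ heq
        · right
          have hlt : (J ^ (i + 1) : Ideal A) < J ^ i :=
            lt_of_le_of_ne (Ideal.pow_le_pow_right (Nat.le_succ i)) heq
          have hlt' : Submodule.restrictScalars ℝ (J ^ (i + 1) : Ideal A) <
              Submodule.restrictScalars ℝ (J ^ i : Ideal A) := by
            refine lt_of_le_of_ne ?_ ?_
            · exact fun x hx => hlt.le hx
            · intro hcontra
              exact heq (Submodule.restrictScalars_injective ℝ A A hcontra)
          have := Submodule.finrank_lt_finrank_of_lt hlt'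
          omega
  rcases main s with hbot | hle
  · exact hbot
  · have h0 : Module.finrank ℝ (Submodule.restrictScalars ℝ (J ^ s : Ideal A)) = 0 := by omega
    have : Submodule.restrictScalars ℝ (J ^ s : Ideal A) = ⊥ :=
      Submodule.finrank_eq_zero.mp h0
    exact Submodule.restrictScalars_injective ℝ A A (by simpa using this)

/-- Let `N` be a commutative unital `ℝ`-algebra in which every finite-codimensional maximal
ideal `m` satisfies `N ⧸ m ≅ ℝ`, and let `I` be an ideal of finite codimension `s > 0`.
Then the radical `√I` equals the intersection of the finite-codimensional maximal ideals
containing `I`, and `(√I) ^ s ⊆ I`. -/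
theorem stmt4 {N : Type*} [CommRing N] [Algebra ℝ N]
    (hres : ∀ m : Ideal N, m.IsMaximal → FiniteDimensional ℝ (N ⧸ m) →
      Module.finrank ℝ (N ⧸ m) = 1)
    (I : Ideal N) [FiniteDimensional ℝ (N ⧸ I)]
    (hs : 0 < Module.finrank ℝ (N ⧸ I)) :
    I.radical = sInf {m : Ideal N | m.IsMaximal ∧ I ≤ m ∧ FiniteDimensional ℝ (N ⧸ m)} ∧
      I.radical ^ (Module.finrank ℝ (N ⧸ I)) ≤ I := by
  -- quotients by primes containing I are finite dimensional
  have hFD : ∀ p : Ideal N, I ≤ p → FiniteDimensional ℝ (N ⧸ p) := by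
    intro p hle
    have hle' : I ≤ Ideal.comap (AlgHom.id ℝ N) p := hle
    let f : (N ⧸ I) →ₐ[ℝ] (N ⧸ p) := Ideal.quotientMapₐ p (AlgHom.id ℝ N) hle'
    have hsurj : Function.Surjective f := by
      intro y
      obtain ⟨x, rfl⟩ := Ideal.Quotient.mk_surjective y
      exact ⟨Ideal.Quotient.mk I x, rfl⟩
    exact Module.Finite.of_surjective f.toLinearMap hsurj
  constructor
  · rw [Ideal.radical_eq_sInf]
    congr 1
    ext m
    constructor
    · rintro ⟨hle, hprime⟩
      haveI : m.IsPrime := hprime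
      haveI : FiniteDimensional ℝ (N ⧸ m) := hFD m hle
      haveI : Algebra.IsIntegral ℝ (N ⧸ m) := Algebra.IsIntegral.of_finite ℝ _
      have hfield : IsField (N ⧸ m) :=
        isField_of_isIntegral_of_isField' (Field.toIsField ℝ)
      exact ⟨Ideal.Quotient.maximal_of_isField m hfield, hle, inferInstance⟩
    · rintro ⟨hmax, hle, _⟩
      exact ⟨hle, hmax.isPrime⟩
  · -- second part
    set A := N ⧸ I
    set π := Ideal.Quotient.mk I
    haveI : IsNoetherianRing A := by
      have h1 : IsNoetherian ℝ A := inferInstance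
      exact isNoetherian_of_tower ℝ (inferInstance : IsNoetherian ℝ A)
    have hnil : IsNilpotent (nilradical A) := IsNoetherianRing.isNilpotent_nilradical A
    have hpow : (nilradical A) ^ (Module.finrank ℝ A) = ⊥ := aux_nilpotent_pow _ hnil
    have hcomap : I.radical = Ideal.comap π (nilradical A) := by
      have : nilradical A = (⊥ : Ideal A).radical := by
        simp [nilradical, Ideal.radical]
      rw [this, Ideal.comap_radical]
      congr 1
      rw [← RingHom.ker_eq_comap_bot]
      exact Ideal.mk_ker.symm
    have hmaple : Ideal.map π I.radical ≤ nilradical A := by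
      rw [hcomap]
      exact Ideal.map_comap_le
    calc I.radical ^ (Module.finrank ℝ A)
        ≤ Ideal.comap π (Ideal.map π (I.radical ^ (Module.finrank ℝ A))) :=
          Ideal.le_comap_map
      _ = Ideal.comap π ((Ideal.map π I.radical) ^ (Module.finrank ℝ A)) := by
          rw [Ideal.map_pow]
      _ ≤ Ideal.comap π ((nilradical A) ^ (Module.finrank ℝ A)) :=
          Ideal.comap_mono (Ideal.pow_right_mono hmaple _)
      _ = Ideal.comap π ⊥ := by rw [hpow]
      _ = I := by
          rw [← RingHom.ker_eq_comap_bot]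
          exact Ideal.mk_ker
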